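/- If the image s_A(X) of the moment curve is countable and A = {a_1,...,a_m} is linearly independent, then the Carathéodory number of the moment cone equals m; i.e., there exists a moment sequence that has no representing measure with fewer than m atoms. -/

import Mathlib

open MeasureTheory

section Aux

variable {X : Type*} [MeasurableSpace X] {m : ℕ}

lemma aux_integrable_dirac {f : X → ℝ} (hf : Measurable f) (x : X) :
    Integrable f (Measure.dirac x) := by
  refine ⟨hf.aestronglyMeasurable, ?_⟩
  rw [HasFiniteIntegral, lintegral_dirac' _ hf.enorm]
  exact enorm_lt_top

lemma aux_span_top (a : Fin m → X → ℝ) (hindep : LinearIndependent ℝ a) :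
    Submodule.span ℝ (Set.range (fun x : X => fun i => a i x)) = ⊤ := by
  by_contra h
  obtain ⟨f, hf0, hfbot⟩ :=
    Submodule.exists_dual_map_eq_bot_of_lt_top (lt_top_iff_ne_top.2 h) inferInstance
  have hker : ∀ x : X, f (fun i => a i x) = 0 := by
    intro x
    have : (fun i => a i x) ∈ Submodule.span ℝ
        (Set.range (fun x : X => fun i => a i x)) :=
      Submodule.subset_span ⟨x, rfl⟩
    have := Submodule.mem_map_of_mem (f := f) this
    rw [hfbot] at this
    simpa using this
  set c : Fin m → ℝ := fun i => f (Pi.single i 1) with hc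
  have hfv : ∀ v : Fin m → ℝ, f v = ∑ i, v i * c i := by
    intro v
    conv_lhs => rw [pi_eq_sum_univ v, map_sum]
    refine Finset.sum_congr rfl fun i _ => ?_
    rw [f.map_smul, smul_eq_mul]
    have hps : (fun j => if i = j then (1:ℝ) else 0) = Pi.single i 1 := by
      funext j
      rw [Pi.single_apply]
      by_cases hij : i = j <;> simp [hij, eq_comm]
    rw [hps]
  have hc0 : c = 0 := by
    have := Fintype.linearIndependent_iff.1 hindep c ?_
    · funext i; exact this i
    · funext x
      have := hker x
      rw [hfv] at this
      simpa [Finset.sum_apply, mul_comm] using this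
  apply hf0
  refine LinearMap.ext fun v => ?_
  rw [hfv, hc0]
  simp

end Aux

/-- If the image of the moment curve is countable and `A = {a 1, …, a m}` is
linearly independent, then the Carathéodory number of the moment cone equals
`m`: there exists a moment sequence admitting no representing measure with
fewer than `m` atoms. -/
theorem caratheodory_number_eq_of_countable_range {X : Type*} [MeasurableSpace X]
    {m : ℕ} (a : Fin m → X → ℝ) (ha : ∀ i, Measurable (a i))
    (hindep : LinearIndependent ℝ a)
    (hcount : (Set.range (fun x : X => fun i => a i x)).Countable) :
    ∃ s : Fin m → ℝ,
      (∃ μ : Measure X, (∀ i, Integrable (a i) μ) ∧ ∀ i, s i = ∫ x, a i x ∂μ) ∧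
      ∀ k : ℕ, k < m →
        ¬∃ (c : Fin k → ℝ) (xs : Fin k → X), (∀ j, 0 < c j) ∧
          ∀ i, s i = ∑ j, c j * a i (xs j) := by
  classical
  rcases Nat.eq_zero_or_pos m with hm | hm
  · subst hm
    exact ⟨fun i => i.elim0, ⟨0, fun i => i.elim0, fun i => i.elim0⟩, fun k hk => by omega⟩
  -- notation
  set sA : X → (Fin m → ℝ) := fun x => fun i => a i x with hsA
  -- a basis from the curve
  have hspan : Submodule.span ℝ (Set.range sA) = ⊤ := aux_span_top a hindep
  obtain ⟨b, hbsub, hbspan, hbind⟩ := exists_linearIndependent ℝ (Set.range sA)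
  rw [hspan] at hbspan
  haveI : FiniteDimensional ℝ (Fin m → ℝ) := inferInstance
  let B : Module.Basis b ℝ (Fin m → ℝ) := Module.Basis.mk hbind (by rw [Subtype.range_coe, hbspan])
  haveI : Fintype b := FiniteDimensional.fintypeBasisIndex B
  have hBval : ∀ j : b, B j = (j : Fin m → ℝ) := fun j => Module.Basis.mk_apply _ _ _
  have hcardb : Fintype.card b = m := by
    have := Module.finrank_eq_card_basis B
    simpa [Module.finrank_fintype_fun_eq_card] using this.symm
  haveI : Nonempty b := by
    rw [← Fintype.card_pos_iff, hcardb]; exact hm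
  -- choose curve points realizing the basis vectors
  have hchoice : ∀ j : b, ∃ x : X, sA x = (j : Fin m → ℝ) := fun j => hbsub j.2
  choose xb hxb using hchoice
  -- the countable family of bad subspaces
  haveI : Countable (Set.range sA) := hcount.to_subtype
  set Bad : (Fin (m - 1) → Set.range sA) → Set (Fin m → ℝ) := fun t =>
    (Submodule.span ℝ (Set.range fun j => (t j : Fin m → ℝ)) : Set (Fin m → ℝ)) with hBad
  have hBadclosed : ∀ t, IsClosed (Bad t) := fun t =>
    (Submodule.span ℝ (Set.range fun j => (t j : Fin m → ℝ))).closed_of_finiteDimensional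
  have hBadne : ∀ t, Bad t ≠ Set.univ := by
    intro t h
    have htop : Submodule.span ℝ (Set.range fun j => (t j : Fin m → ℝ)) = ⊤ := by
      rw [Submodule.eq_top_iff']
      intro x
      have : x ∈ Bad t := h ▸ Set.mem_univ x
      exact this
    have h1 : Module.finrank ℝ (Submodule.span ℝ
        (Set.range fun j => (t j : Fin m → ℝ))) ≤ m - 1 := by
      simpa [Set.finrank] using finrank_range_le_card (R := ℝ) (fun j => (t j : Fin m → ℝ))
    rw [htop] at h1
    simp [Module.finrank_fintype_fun_eq_card] at h1
    omega
  have hBadint : ∀ t, interior (Bad t) = ∅ := by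
    intro t
    by_contra h
    rcases Set.nonempty_iff_ne_empty.2 h with ⟨y, hy⟩
    have htop := Submodule.eq_top_of_nonempty_interior'
      (s := Submodule.span ℝ (Set.range fun j => (t j : Fin m → ℝ))) ⟨y, hy⟩
    refine hBadne t (Set.eq_univ_of_univ_subset fun z _ => ?_)
    show z ∈ (Submodule.span ℝ (Set.range fun j => (t j : Fin m → ℝ)) : Set (Fin m → ℝ))
    rw [SetLike.mem_coe, htop]
    trivial
  -- the good open cone
  set C : Set (Fin m → ℝ) := {y | ∀ j : b, 0 < B.equivFun y j} with hC
  have hCopen : IsOpen C := by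
    have : C = ⋂ j : b, (fun y => B.equivFun y j) ⁻¹' Set.Ioi 0 := by
      ext y; simp [hC, Set.mem_iInter]
    rw [this]
    refine isOpen_iInter_of_finite fun j => ?_
    have hcont : Continuous fun y => B.equivFun y j :=
      (continuous_apply j).comp (LinearMap.continuous_of_finiteDimensional
        (B.equivFun : (Fin m → ℝ) →ₗ[ℝ] (b → ℝ)))
    exact hcont.isOpen_preimage _ isOpen_Ioi
  have hCne : C.Nonempty := by
    refine ⟨B.equivFun.symm (fun _ => 1), fun j => ?_⟩
    rw [LinearEquiv.apply_symm_apply]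
    norm_num
  -- Baire: pick a good point outside all bad subspaces
  have hdense : Dense (⋂ t, (Bad t)ᶜ) := by
    exact dense_iInter_of_isOpen (fun t => (hBadclosed t).isOpen_compl)
      fun t => interior_eq_empty_iff_dense_compl.1 (hBadint t)
  obtain ⟨s0, hs0D, hs0C⟩ := hdense.exists_mem_open hCopen hCne
  have hs0bad : ∀ t, s0 ∉ Bad t := by
    intro t
    have := Set.mem_iInter.1 hs0D t
    exact this
  set c : b → ℝ := fun j => B.equivFun s0 j with hcdef
  have hcpos : ∀ j, 0 < c j := hs0C
  have hs0sum : s0 = ∑ j : b, c j • B j := (B.sum_equivFun s0).symm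
  refine ⟨s0, ?_, ?_⟩
  · -- representing measure with m atoms
    refine ⟨∑ j : b, ENNReal.ofReal (c j) • Measure.dirac (xb j), ?_, ?_⟩
    · intro i
      exact integrable_finset_sum_measure.2 fun j _ =>
        (aux_integrable_dirac (ha i) (xb j)).smul_measure ENNReal.ofReal_ne_top
    · intro i
      rw [integral_finset_sum_measure (fun j _ =>
        (aux_integrable_dirac (ha i) (xb j)).smul_measure ENNReal.ofReal_ne_top)]
      have : ∀ j : b, ∫ x, a i x ∂(ENNReal.ofReal (c j) • Measure.dirac (xb j))
          = c j * a i (xb j) := by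
        intro j
        rw [integral_smul_measure, integral_dirac' _ _ (ha i).stronglyMeasurable,
          ENNReal.toReal_ofReal (hcpos j).le, smul_eq_mul]
      rw [Finset.sum_congr rfl fun j _ => this j]
      have := congrFun hs0sum i
      rw [this, Finset.sum_apply]
      refine Finset.sum_congr rfl fun j _ => ?_
      rw [hBval j, ← hxb j]
      simp [hsA]
      
  · -- no representation with fewer than m atoms
    rintro k hk ⟨c', xs, hc'pos, heq⟩
    have hkle : k ≤ m - 1 := by omega
    set t : Fin (m - 1) → Set.range sA := fun j =>
      if h : (j : ℕ) < k then ⟨sA (xs ⟨j, h⟩), Set.mem_range_self _⟩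
      else ⟨sA (xb (Classical.arbitrary b)), Set.mem_range_self _⟩ with ht
    apply hs0bad t
    have hs0eq : s0 = ∑ j : Fin k, c' j • sA (xs j) := by
      funext i
      rw [heq i, Finset.sum_apply]
      simp [hsA]
    rw [hBad, SetLike.mem_coe, hs0eq]
    refine Submodule.sum_mem _ fun j _ => Submodule.smul_mem _ _ ?_
    apply Submodule.subset_span
    refine ⟨Fin.castLE hkle j, ?_⟩
    have hj : ((Fin.castLE hkle j : Fin (m - 1)) : ℕ) < k := j.2
    rw [ht]
    simp only [hj, dif_pos]
    rfl
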